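/- The polarization martingale εₙ (with ε₀ = ε, and εₙ₊₁ equal to εₙ² or 1-(1-εₙ)² each with probability 1/2) converges almost surely to a {0,1}-valued random variable ε_∞ with P(ε_∞ = 1) = ε. -/

import Mathlib

open MeasureTheory ProbabilityTheory Filter
open scoped ENNReal Topology

/-- auxiliary: explicit recursion for the polarization process as function of coin sequence -/
noncomputable def polarF (e : ℝ) : ℕ → (ℕ → Bool) → ℝ
  | 0, _ => e
  | (n+1), v => if v (n+1) then (polarF e n v) ^ 2 else 1 - (1 - polarF e n v) ^ 2

lemma polarF_depends (e : ℝ) : ∀ n (v w : ℕ → Bool), (∀ k, k ≤ n → v k = w k) →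
    polarF e n v = polarF e n w := by
  intro n
  induction n with
  | zero => intro v w _; rfl
  | succ n ih =>
    intro v w h
    have h1 : polarF e n v = polarF e n w := ih v w (fun k hk => h k (Nat.le_succ_of_le hk))
    simp only [polarF, h1, h (n+1) le_rfl]

lemma polarF_measurable (e : ℝ) (n : ℕ) : Measurable (polarF e n) := by
  induction n with
  | zero => exact measurable_const
  | succ n ih =>
    have hs : MeasurableSet {v : ℕ → Bool | v (n+1) = true} := by
      have h := (measurable_pi_apply (X := fun _ : ℕ => Bool) (n+1)) (MeasurableSet.singleton true)
      exact h
    exact Measurable.ite hs (ih.pow_const 2)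
      (measurable_const.sub ((measurable_const.sub ih).pow_const 2))

lemma key_ineq {x : ℝ} (hx0 : 0 ≤ x) (hx1 : x ≤ 1) :
    Real.sqrt (x ^ 2 * (1 - x ^ 2)) + Real.sqrt ((1 - (1 - x) ^ 2) * (1 - x) ^ 2) ≤
      Real.sqrt 3 * Real.sqrt (x * (1 - x)) := by
  set u := Real.sqrt (x * (1 + x)) with hu
  set v := Real.sqrt ((1 - x) * (2 - x)) with hv
  have hc0 : 0 ≤ x * (1 - x) := mul_nonneg hx0 (by linarith)
  have e1 : x ^ 2 * (1 - x ^ 2) = (x * (1 - x)) * (x * (1 + x)) := by ring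
  have e2 : (1 - (1 - x) ^ 2) * (1 - x) ^ 2 = (x * (1 - x)) * ((1 - x) * (2 - x)) := by ring
  rw [e1, e2, Real.sqrt_mul hc0, Real.sqrt_mul hc0, ← mul_add, mul_comm (Real.sqrt 3)]
  refine mul_le_mul_of_nonneg_left ?_ (Real.sqrt_nonneg _)
  -- now show u + v ≤ sqrt 3
  have hu2 : u ^ 2 = x * (1 + x) := Real.sq_sqrt (by nlinarith)
  have hv2 : v ^ 2 = (1 - x) * (2 - x) := Real.sq_sqrt (by nlinarith)
  have hun : 0 ≤ u := Real.sqrt_nonneg _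
  have hvn : 0 ≤ v := Real.sqrt_nonneg _
  have huv : u * v ≤ (1 + 2 * x - 2 * x ^ 2) / 2 := by
    rw [hu, hv, ← Real.sqrt_mul (by nlinarith)]
    rw [show (1 + 2 * x - 2 * x ^ 2) / 2 = Real.sqrt (((1 + 2 * x - 2 * x ^ 2) / 2) ^ 2) from
      (Real.sqrt_sq (by nlinarith)).symm]
    exact Real.sqrt_le_sqrt (by nlinarith [sq_nonneg (1 - 2 * x)])
  rw [show Real.sqrt 3 = Real.sqrt 3 from rfl]
  have h3 : (u + v) ^ 2 ≤ 3 := by nlinarith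
  calc u + v = Real.sqrt ((u + v) ^ 2) := (Real.sqrt_sq (by positivity)).symm
    _ ≤ Real.sqrt 3 := Real.sqrt_le_sqrt h3

theorem stmt_6 {Ω : Type*} [m : MeasurableSpace Ω] (μ : Measure Ω) [IsProbabilityMeasure μ]
    (B : ℕ → Ω → Bool) (hBm : ∀ n, StronglyMeasurable (B n))
    (hIndep : iIndepFun B μ)
    (hFair : ∀ n, μ {ω | B n ω = true} = 1 / 2)
    (ε : ℝ) (hε : ε ∈ Set.Icc (0 : ℝ) 1)
    (X : ℕ → Ω → ℝ) (hX0 : ∀ ω, X 0 ω = ε)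
    (hXrec : ∀ n ω, X (n + 1) ω =
      if B (n + 1) ω then (X n ω) ^ 2 else 1 - (1 - X n ω) ^ 2) :
    ∃ Xinf : Ω → ℝ,
      (∀ᵐ ω ∂μ, Tendsto (fun n => X n ω) atTop (𝓝 (Xinf ω))) ∧
      (∀ᵐ ω ∂μ, Xinf ω = 0 ∨ Xinf ω = 1) ∧
      μ {ω | Xinf ω = 1} = ENNReal.ofReal ε := by
  obtain ⟨hε0, hε1⟩ := hε
  have hBmeas : ∀ n, Measurable (B n) := fun n => (hBm n).measurable
  have hBset : ∀ n, MeasurableSet {ω | B n ω = true} :=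
    fun n => (hBmeas n) (MeasurableSet.singleton true)
  -- X stays in [0,1]
  have hX01 : ∀ n ω, 0 ≤ X n ω ∧ X n ω ≤ 1 := by
    intro n
    induction n with
    | zero => intro ω; rw [hX0]; exact ⟨hε0, hε1⟩
    | succ n ih =>
      intro ω
      obtain ⟨h0, h1⟩ := ih ω
      rw [hXrec]
      by_cases h : B (n+1) ω = true
      · rw [if_pos h]; constructor <;> nlinarith
      · rw [if_neg h]; constructor <;> nlinarith
  -- measurability of X n
  have hXmeas : ∀ n, Measurable (X n) := by
    intro n
    induction n with
    | zero =>
      have : X 0 = fun _ => ε := funext hX0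
      rw [this]; exact measurable_const
    | succ n ih =>
      have : X (n+1) = fun ω =>
          if B (n+1) ω = true then (X n ω) ^ 2 else 1 - (1 - X n ω) ^ 2 := by
        funext ω; exact hXrec n ω
      rw [this]
      exact Measurable.ite (hBset (n+1)) (ih.pow_const 2)
        (measurable_const.sub ((measurable_const.sub ih).pow_const 2))
  -- integrability of bounded measurable functions
  have hbd : ∀ (f : Ω → ℝ), Measurable f → ∀ C : ℝ, (∀ ω, |f ω| ≤ C) → Integrable f μ := by
    intro f hf C hC
    exact (integrable_const C).mono' hf.aestronglyMeasurable (ae_of_all _ fun ω => hC ω)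
  have hXint : ∀ n, Integrable (X n) μ := by
    intro n
    refine hbd _ (hXmeas n) 1 fun ω => ?_
    obtain ⟨h0, h1⟩ := hX01 n ω
    rw [abs_le]; exact ⟨by linarith, h1⟩
  -- X n as a function of the coins
  have hXF : ∀ n ω, X n ω = polarF ε n (fun k => B k ω) := by
    intro n
    induction n with
    | zero => intro ω; rw [hX0]; rfl
    | succ n ih =>
      intro ω
      rw [hXrec, ih ω]
      simp only [polarF]
  -- independence of X n and B (n+1)
  have hindep : ∀ n, IndepFun (X n) (B (n+1)) μ := by
    intro n
    have hdis : Disjoint (Finset.range (n+1)) ({n+1} : Finset ℕ) := by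
      simp only [Finset.disjoint_left, Finset.mem_range, Finset.mem_singleton]
      omega
    have hT := hIndep.indepFun_finset (Finset.range (n+1)) {n+1} hdis hBmeas
    classical
    set φ : ((i : (Finset.range (n+1) : Finset ℕ)) → Bool) → ℝ := fun u =>
      polarF ε n (fun k => if h : k ∈ Finset.range (n+1) then u ⟨k, h⟩ else false) with hφdef
    have hφ : Measurable φ := by
      refine (polarF_measurable ε n).comp (measurable_pi_lambda _ fun k => ?_)
      by_cases hk : k ∈ Finset.range (n+1)
      · simp only [hk, dif_pos]
        exact measurable_pi_apply _
      · simp only [hk, dif_neg, not_false_iff]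
        exact measurable_const
    set ψ : ((i : ({n+1} : Finset ℕ)) → Bool) → Bool :=
      fun u => u ⟨n+1, Finset.mem_singleton_self _⟩ with hψdef
    have hψ : Measurable ψ := measurable_pi_apply _
    have h2 := hT.comp hφ hψ
    have e1 : (φ ∘ fun a (i : (Finset.range (n+1) : Finset ℕ)) => B i a) = X n := by
      funext ω
      simp only [Function.comp_apply, hφdef]
      rw [hXF n ω]
      apply polarF_depends
      intro k hk
      have hmem : k ∈ Finset.range (n+1) := Finset.mem_range.mpr (by omega)
      simp only [hmem, dif_pos]
    have e2 : (ψ ∘ fun a (i : (({n+1} : Finset ℕ) : Finset ℕ)) => B i a) = B (n+1) := rfl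
    rwa [e1, e2] at h2
  -- the signed coin integrates to zero against any bounded function of X n
  have hzero : ∀ n (g : ℝ → ℝ), Measurable g → ∀ C : ℝ,
      (∀ x, 0 ≤ x → x ≤ 1 → |g x| ≤ C) →
      ∫ ω, (if B (n+1) ω then (1:ℝ) else -1) * g (X n ω) ∂μ = 0 := by
    intro n g hg C hC
    have hσ : Measurable (fun b : Bool => if b then (1:ℝ) else -1) := measurable_of_countable _
    have hsignmeas : Measurable (fun ω => if B (n+1) ω then (1:ℝ) else -1) :=
      hσ.comp (hBmeas (n+1))
    have hsignint : Integrable (fun ω => if B (n+1) ω then (1:ℝ) else -1) μ := by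
      refine hbd _ hsignmeas 1 fun ω => ?_
      by_cases h : B (n+1) ω = true <;> simp [h]
    have hgXint : Integrable (fun ω => g (X n ω)) μ := by
      refine hbd _ (hg.comp (hXmeas n)) C fun ω => ?_
      exact hC _ (hX01 n ω).1 (hX01 n ω).2
    have hIF : IndepFun (fun ω => if B (n+1) ω then (1:ℝ) else -1) (fun ω => g (X n ω)) μ :=
      IndepFun.comp (hindep n).symm hσ hg
    have hmul := hIF.integral_fun_mul_eq_mul_integral hsignint.aestronglyMeasurable hgXint.aestronglyMeasurable
    have hsign0 : ∫ ω, (if B (n+1) ω then (1:ℝ) else -1) ∂μ = 0 := by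
      have heq : (fun ω => if B (n+1) ω then (1:ℝ) else -1) =
          fun ω => Set.indicator {ω | B (n+1) ω = true} (fun _ => (2:ℝ)) ω - 1 := by
        funext ω
        by_cases h : B (n+1) ω = true
        · rw [if_pos h,
            Set.indicator_of_mem (show ω ∈ {ω | B (n+1) ω = true} from h)]; norm_num
        · rw [if_neg h,
            Set.indicator_of_notMem (show ω ∉ {ω | B (n+1) ω = true} from h)]; norm_num
      rw [heq]
      rw [integral_sub ((integrable_const (2:ℝ)).indicator (hBset (n+1))) (integrable_const 1)]
      rw [integral_indicator_const (2:ℝ) (hBset (n+1)), measureReal_def, hFair (n+1)]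
      simp
    calc ∫ ω, (if B (n+1) ω then (1:ℝ) else -1) * g (X n ω) ∂μ
        = (∫ ω, (if B (n+1) ω then (1:ℝ) else -1) ∂μ) * ∫ ω, g (X n ω) ∂μ := hmul
      _ = 0 := by rw [hsign0, zero_mul]
  -- mean is preserved
  have hmean : ∀ n, ∫ ω, X n ω ∂μ = ε := by
    intro n
    induction n with
    | zero =>
      have : X 0 = fun _ => ε := funext hX0
      rw [this, integral_const]; simp
    | succ n ih =>
      have hpt : ∀ ω, X (n+1) ω =
          X n ω - (if B (n+1) ω then (1:ℝ) else -1) * (X n ω * (1 - X n ω)) := by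
        intro ω
        rw [hXrec]
        by_cases h : B (n+1) ω = true
        · rw [if_pos h, if_pos h]; ring
        · rw [if_neg h, if_neg h]; ring
      have hZmeas : Measurable (fun x : ℝ => x * (1 - x)) :=
        measurable_id.mul (measurable_const.sub measurable_id)
      have hz := hzero n (fun x => x * (1 - x)) hZmeas 1 (by
        intro x h0 h1
        rw [abs_of_nonneg (mul_nonneg h0 (by linarith))]
        nlinarith [sq_nonneg x, sq_nonneg (1 - x)])
      have hint2 : Integrable (fun ω =>
          (if B (n+1) ω then (1:ℝ) else -1) * (X n ω * (1 - X n ω))) μ := by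
        refine hbd _ ?_ 1 fun ω => ?_
        · exact ((measurable_of_countable (fun b : Bool => if b then (1:ℝ) else -1)).comp
            (hBmeas (n+1))).mul ((hXmeas n).mul (measurable_const.sub (hXmeas n)))
        · obtain ⟨h0, h1⟩ := hX01 n ω
          rw [abs_mul]
          have h2 : |if B (n+1) ω then (1:ℝ) else -1| = 1 := by
            by_cases h : B (n+1) ω = true <;> simp [h]
          rw [h2, one_mul, abs_of_nonneg (by nlinarith)]
          nlinarith
      have : (fun ω => X (n+1) ω) = fun ω =>
          X n ω - (if B (n+1) ω then (1:ℝ) else -1) * (X n ω * (1 - X n ω)) := funext hpt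
      rw [this, integral_sub (hXint n) hint2, hz, sub_zero, ih]
  -- the sqrt potential
  set W : ℕ → Ω → ℝ := fun n ω => Real.sqrt (X n ω * (1 - X n ω)) with hWdef
  have hWnn : ∀ n ω, 0 ≤ W n ω := fun n ω => Real.sqrt_nonneg _
  have hWle : ∀ n ω, W n ω ≤ 1 := by
    intro n ω
    obtain ⟨h0, h1⟩ := hX01 n ω
    exact Real.sqrt_le_one.mpr (by nlinarith)
  have hWmeas : ∀ n, Measurable (W n) :=
    fun n => ((hXmeas n).mul (measurable_const.sub (hXmeas n))).sqrt
  have hWint : ∀ n, Integrable (W n) μ := by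
    intro n
    refine hbd _ (hWmeas n) 1 fun ω => ?_
    rw [abs_of_nonneg (hWnn n ω)]; exact hWle n ω
  -- one-step contraction of the potential
  have hWstep : ∀ n, ∫ ω, W (n+1) ω ∂μ ≤ Real.sqrt 3 / 2 * ∫ ω, W n ω ∂μ := by
    intro n
    set gt : ℝ → ℝ := fun x => Real.sqrt (x^2 * (1 - x^2)) with hgtdef
    set gf : ℝ → ℝ := fun x => Real.sqrt ((1 - (1-x)^2) * (1-x)^2) with hgfdef
    have hgtm : Measurable gt :=
      ((measurable_id.pow_const 2).mul (measurable_const.sub (measurable_id.pow_const 2))).sqrt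
    have hgfm : Measurable gf :=
      ((measurable_const.sub ((measurable_const.sub measurable_id).pow_const 2)).mul
        ((measurable_const.sub measurable_id).pow_const 2)).sqrt
    have hgt01 : ∀ x : ℝ, 0 ≤ x → x ≤ 1 → gt x ≤ 1 := by
      intro x h0 h1
      exact Real.sqrt_le_one.mpr (by nlinarith)
    have hgf01 : ∀ x : ℝ, 0 ≤ x → x ≤ 1 → gf x ≤ 1 := by
      intro x h0 h1
      exact Real.sqrt_le_one.mpr (by nlinarith)
    have hgtnn : ∀ x : ℝ, 0 ≤ gt x := fun x => Real.sqrt_nonneg _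
    have hgfnn : ∀ x : ℝ, 0 ≤ gf x := fun x => Real.sqrt_nonneg _
    have hpt : ∀ ω, W (n+1) ω = (gt (X n ω) + gf (X n ω)) / 2 +
        (if B (n+1) ω then (1:ℝ) else -1) * ((gt (X n ω) - gf (X n ω)) / 2) := by
      intro ω
      show Real.sqrt (X (n+1) ω * (1 - X (n+1) ω)) = _
      rw [hXrec]
      by_cases h : B (n+1) ω = true
      · rw [if_pos h, if_pos h]
        show gt (X n ω) = _
        ring
      · rw [if_neg h, if_neg h]
        rw [show (1 - (1 - (1 - X n ω)^2)) = (1 - X n ω)^2 from by ring]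
        show gf (X n ω) = _
        ring
    -- integrate the decomposition
    have hAmeas : Measurable (fun ω => (gt (X n ω) + gf (X n ω)) / 2) :=
      (((hgtm.comp (hXmeas n)).add (hgfm.comp (hXmeas n))).div_const 2)
    have hAint : Integrable (fun ω => (gt (X n ω) + gf (X n ω)) / 2) μ := by
      refine hbd _ hAmeas 1 fun ω => ?_
      obtain ⟨h0, h1⟩ := hX01 n ω
      rw [abs_of_nonneg (by positivity)]
      have := hgt01 _ h0 h1
      have := hgf01 _ h0 h1
      linarith
    have hSint : Integrable (fun ω =>
        (if B (n+1) ω then (1:ℝ) else -1) * ((gt (X n ω) - gf (X n ω)) / 2)) μ := by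
      refine hbd _ (((measurable_of_countable (fun b : Bool => if b then (1:ℝ) else -1)).comp
        (hBmeas (n+1))).mul (((hgtm.comp (hXmeas n)).sub (hgfm.comp (hXmeas n))).div_const 2))
        1 fun ω => ?_
      obtain ⟨h0, h1⟩ := hX01 n ω
      rw [abs_mul]
      have h2 : |if B (n+1) ω then (1:ℝ) else -1| = 1 := by
        by_cases h : B (n+1) ω = true <;> simp [h]
      rw [h2, one_mul, abs_div]
      have h3 := hgt01 _ h0 h1
      have h4 := hgf01 _ h0 h1
      have h5 := hgtnn (X n ω)
      have h6 := hgfnn (X n ω)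
      have h7 : |gt (X n ω) - gf (X n ω)| ≤ 1 :=
        abs_sub_le_iff.mpr ⟨by linarith, by linarith⟩
      rw [abs_of_nonneg (by norm_num : (0:ℝ) ≤ 2)]
      linarith
    have hz := hzero n (fun x => (gt x - gf x) / 2) ((hgtm.sub hgfm).div_const 2) 1 (by
      intro x h0 h1
      have h3 := hgt01 _ h0 h1
      have h4 := hgf01 _ h0 h1
      have h5 := hgtnn x
      have h6 := hgfnn x
      have h7 : |gt x - gf x| ≤ 1 := abs_sub_le_iff.mpr ⟨by linarith, by linarith⟩
      rw [abs_div, abs_of_nonneg (by norm_num : (0:ℝ) ≤ 2)]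
      linarith)
    have heq : (fun ω => W (n+1) ω) = fun ω => (gt (X n ω) + gf (X n ω)) / 2 +
        (if B (n+1) ω then (1:ℝ) else -1) * ((gt (X n ω) - gf (X n ω)) / 2) := funext hpt
    calc ∫ ω, W (n+1) ω ∂μ
        = ∫ ω, ((gt (X n ω) + gf (X n ω)) / 2 +
            (if B (n+1) ω then (1:ℝ) else -1) * ((gt (X n ω) - gf (X n ω)) / 2)) ∂μ := by
          rw [heq]
      _ = (∫ ω, (gt (X n ω) + gf (X n ω)) / 2 ∂μ) +
            ∫ ω, (if B (n+1) ω then (1:ℝ) else -1) * ((gt (X n ω) - gf (X n ω)) / 2) ∂μ :=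
          integral_add hAint hSint
      _ = ∫ ω, (gt (X n ω) + gf (X n ω)) / 2 ∂μ := by rw [hz, add_zero]
      _ ≤ ∫ ω, Real.sqrt 3 / 2 * W n ω ∂μ := by
          refine integral_mono hAint ((hWint n).const_mul _) fun ω => ?_
          obtain ⟨h0, h1⟩ := hX01 n ω
          have hk := key_ineq h0 h1
          show (gt (X n ω) + gf (X n ω)) / 2 ≤ Real.sqrt 3 / 2 * Real.sqrt (X n ω * (1 - X n ω))
          rw [hgtdef, hgfdef] at *
          simp only at hk ⊢
          linarith
      _ = Real.sqrt 3 / 2 * ∫ ω, W n ω ∂μ := integral_const_mul _ _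
  -- geometric decay of the potential in mean
  have hr0 : (0:ℝ) ≤ Real.sqrt 3 / 2 := by positivity
  have hr1 : Real.sqrt 3 / 2 < 1 := by
    nlinarith [Real.sq_sqrt (by norm_num : (0:ℝ) ≤ 3), Real.sqrt_nonneg 3]
  have hWgeom : ∀ n, ∫ ω, W n ω ∂μ ≤ (1/2) * (Real.sqrt 3 / 2) ^ n := by
    intro n
    induction n with
    | zero =>
      have : (fun ω => W 0 ω) = fun _ => Real.sqrt (ε * (1 - ε)) := by
        funext ω; show Real.sqrt (X 0 ω * (1 - X 0 ω)) = _; rw [hX0]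
      rw [this, integral_const]
      simp only [measure_univ, probReal_univ, ENNReal.toReal_one, one_smul, pow_zero, mul_one]
      rw [Real.sqrt_le_left (by norm_num)]
      nlinarith [sq_nonneg (ε - 1/2)]
    | succ n ih =>
      calc ∫ ω, W (n+1) ω ∂μ ≤ Real.sqrt 3 / 2 * ∫ ω, W n ω ∂μ := hWstep n
        _ ≤ Real.sqrt 3 / 2 * ((1/2) * (Real.sqrt 3 / 2) ^ n) :=
            mul_le_mul_of_nonneg_left ih hr0
        _ = (1/2) * (Real.sqrt 3 / 2) ^ (n+1) := by ring
  -- a.s. summability of the potential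
  have hsum : ∀ᵐ ω ∂μ, Summable (fun n => W n ω) := by
    have hsm : ∀ n : ℕ, Measurable (fun ω => ENNReal.ofReal (W n ω)) :=
      fun n => (hWmeas n).ennreal_ofReal
    have hgsum : Summable (fun n : ℕ => (1/2 : ℝ) * (Real.sqrt 3 / 2) ^ n) :=
      (summable_geometric_of_lt_one hr0 hr1).mul_left _
    have hlin : ∫⁻ ω, ∑' n, ENNReal.ofReal (W n ω) ∂μ ≠ ⊤ := by
      rw [lintegral_tsum (fun n => (hsm n).aemeasurable)]
      have hle : ∑' n, ∫⁻ ω, ENNReal.ofReal (W n ω) ∂μ ≤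
          ∑' n : ℕ, ENNReal.ofReal ((1/2) * (Real.sqrt 3 / 2) ^ n) := by
        refine ENNReal.tsum_le_tsum fun n => ?_
        rw [← ofReal_integral_eq_lintegral_ofReal (hWint n) (ae_of_all _ fun ω => hWnn n ω)]
        exact ENNReal.ofReal_le_ofReal (hWgeom n)
      refine ne_top_of_le_ne_top ?_ hle
      rw [← ENNReal.ofReal_tsum_of_nonneg (fun n => by positivity) hgsum]
      exact ENNReal.ofReal_ne_top
    have hfin := ae_lt_top (Measurable.ennreal_tsum hsm) hlin
    filter_upwards [hfin] with ω hω
    have hsumm := ENNReal.summable_toReal hω.ne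
    exact hsumm.congr fun n => ENNReal.toReal_ofReal (hWnn n ω)
  -- a.s. convergence
  have htend : ∀ᵐ ω ∂μ, ∃ l : ℝ, Tendsto (fun n => X n ω) atTop (𝓝 l) := by
    filter_upwards [hsum] with ω hω
    have hdist : ∀ n, dist (X n ω) (X (n+1) ω) ≤ W n ω := by
      intro n
      obtain ⟨h0, h1⟩ := hX01 n ω
      have hZnn : 0 ≤ X n ω * (1 - X n ω) := mul_nonneg h0 (by linarith)
      have hZle : X n ω * (1 - X n ω) ≤ W n ω := by
        have : X n ω * (1 - X n ω) ≤ 1 := by nlinarith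
        calc X n ω * (1 - X n ω) = Real.sqrt ((X n ω * (1 - X n ω))^2) :=
              (Real.sqrt_sq hZnn).symm
          _ ≤ Real.sqrt (X n ω * (1 - X n ω)) := Real.sqrt_le_sqrt (by nlinarith)
      rw [Real.dist_eq]
      rw [hXrec]
      by_cases h : B (n+1) ω = true
      · rw [if_pos h, show X n ω - X n ω ^ 2 = X n ω * (1 - X n ω) from by ring,
          abs_of_nonneg hZnn]
        exact hZle
      · rw [if_neg h, show X n ω - (1 - (1 - X n ω)^2) = -(X n ω * (1 - X n ω)) from by ring,
          abs_neg, abs_of_nonneg hZnn]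
        exact hZle
    have hc : CauchySeq (fun n => X n ω) :=
      cauchySeq_of_summable_dist (Summable.of_nonneg_of_le (fun n => dist_nonneg) hdist hω)
    exact cauchySeq_tendsto_of_complete hc
  obtain ⟨Xinf, hXinfm, hXinftend⟩ :=
    measurable_limit_of_tendsto_metrizable_ae (fun n => (hXmeas n).aemeasurable) htend
  have h01 : ∀ᵐ ω ∂μ, Xinf ω = 0 ∨ Xinf ω = 1 := by
    filter_upwards [hXinftend, hsum] with ω h1 h2
    have hW0 : Tendsto (fun n => W n ω) atTop (𝓝 0) := h2.tendsto_atTop_zero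
    have hZ0 : Tendsto (fun n => X n ω * (1 - X n ω)) atTop (𝓝 0) := by
      have hm : Tendsto (fun n => W n ω * W n ω) atTop (𝓝 (0 * 0)) := hW0.mul hW0
      rw [mul_zero] at hm
      refine hm.congr fun n => ?_
      exact Real.mul_self_sqrt (mul_nonneg (hX01 n ω).1 (by linarith [(hX01 n ω).2]))
    have hZl : Tendsto (fun n => X n ω * (1 - X n ω)) atTop
        (𝓝 (Xinf ω * (1 - Xinf ω))) := h1.mul (tendsto_const_nhds.sub h1)
    have hzero01 : Xinf ω * (1 - Xinf ω) = 0 := tendsto_nhds_unique hZl hZ0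
    rcases mul_eq_zero.mp hzero01 with h | h
    · exact Or.inl h
    · exact Or.inr (by linarith)
  refine ⟨Xinf, hXinftend, h01, ?_⟩
  -- the limit has mean ε
  have hXinfmean : ∫ ω, Xinf ω ∂μ = ε := by
    have hdct := tendsto_integral_of_dominated_convergence (fun _ => (1:ℝ))
      (fun n => (hXmeas n).aestronglyMeasurable) (integrable_const 1)
      (fun n => ae_of_all _ fun ω => by
        obtain ⟨h0, h1⟩ := hX01 n ω
        rw [Real.norm_eq_abs, abs_of_nonneg h0]; exact h1) hXinftend
    have hconst : Tendsto (fun _ : ℕ => ε) atTop (𝓝 (∫ ω, Xinf ω ∂μ)) := by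
      refine hdct.congr fun n => ?_
      exact hmean n
    exact tendsto_nhds_unique hconst tendsto_const_nhds
  -- convert mean to measure of the {1} set
  have hsmeas : MeasurableSet {ω | Xinf ω = 1} :=
    hXinfm (MeasurableSet.singleton 1)
  have hind : Xinf =ᵐ[μ] fun ω => Set.indicator {ω | Xinf ω = 1} (fun _ => (1:ℝ)) ω := by
    filter_upwards [h01] with ω h
    rcases h with h | h
    · rw [h, Set.indicator_of_notMem (show ω ∉ {ω | Xinf ω = 1} from by
        simp only [Set.mem_setOf_eq, h]; norm_num)]
    · rw [h, Set.indicator_of_mem (show ω ∈ {ω | Xinf ω = 1} from h)]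
  have hint_eq : ∫ ω, Xinf ω ∂μ = (μ {ω | Xinf ω = 1}).toReal := by
    rw [integral_congr_ae hind, integral_indicator_const (1:ℝ) hsmeas, smul_eq_mul, mul_one, measureReal_def]
  have hne : μ {ω | Xinf ω = 1} ≠ ⊤ := measure_ne_top μ _
  rw [← ENNReal.ofReal_toReal hne, ← hint_eq, hXinfmean]
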